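/- arXiv:1602.03583 — 3 statements merged into one kernel-verified Lean document; each statement's English description precedes it below -/
import Mathlib

section
/- Let p be an odd prime, k ≥ 2 an integer, and a, n integers with gcd(a, p) = 1 and p | n. Then the Kloosterman sum S(n, a; p^k) = Σ_{b mod p^k, gcd(b,p^k)=1} e((n·b̄ + a·b)/p^k) equals 0, where b̄ denotes the multiplicative inverse of b modulo p^k and e(x) = exp(2πix). -/
/-- `e(x) = exp(2πix)`. -/
noncomputable def e (x : ℝ) : ℂ := Complex.exp (2 * Real.pi * Complex.I * x)

/-- The Kloosterman sum `S(n, a; q) = Σ_{b mod q, gcd(b,q)=1} e((n·b̄ + a·b)/q)`,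
where `b̄` is the multiplicative inverse of `b` modulo `q`. -/
noncomputable def kloosterman (n a : ℤ) (q : ℕ) : ℂ :=
  ∑ b ∈ (Finset.range q).filter (fun b => Nat.Coprime b q),
    e (((n * ((((b : ZMod q))⁻¹.val : ℕ) : ℤ) + a * b : ℤ) : ℝ) / q)

lemma e_add (x y : ℝ) : e (x + y) = e x * e y := by
  simp [e, ← Complex.exp_add]; ring_nf

lemma e_int (m : ℤ) : e m = 1 := by
  simp only [e]
  have : (2 * Real.pi * Complex.I * (m:ℝ)) = (m:ℤ) * (2 * Real.pi * Complex.I) := by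
    push_cast; ring
  rw [this, Complex.exp_int_mul_two_pi_mul_I]

lemma e_eq_of_dvd (q : ℕ) (hq : q ≠ 0) {m₁ m₂ : ℤ} (h : (q:ℤ) ∣ m₁ - m₂) :
    e ((m₁ : ℝ) / q) = e ((m₂ : ℝ) / q) := by
  obtain ⟨c, hc⟩ := h
  have hm : m₁ = m₂ + q * c := by linarith [hc]
  have hq' : (q : ℝ) ≠ 0 := Nat.cast_ne_zero.mpr hq
  have : (m₁ : ℝ) / q = (m₂ : ℝ) / q + (c : ℝ) := by
    rw [hm]; push_cast; field_simp
  rw [this, e_add, e_int, mul_one]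

/-- Let `p` be an odd prime, `k ≥ 2`, and `a, n` integers with `gcd(a,p) = 1` and
`p ∣ n`. Then `S(n, a; p^k) = 0`. -/
theorem kloosterman_eq_zero_of_dvd (p : ℕ) (hp : p.Prime) (hodd : Odd p)
    (k : ℕ) (hk : 2 ≤ k) (a n : ℤ) (ha : Int.gcd a p = 1) (hn : (p : ℤ) ∣ n) :
    kloosterman n a (p ^ k) = 0 := by
  set q := p ^ k with hq
  have hp1 : 1 < p := hp.one_lt
  have hqpos : 0 < q := pow_pos hp.pos k
  haveI : NeZero q := ⟨hqpos.ne'⟩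
  haveI : NeZero (p ^ (k-1)) := ⟨(pow_pos hp.pos _).ne'⟩
  set s : ZMod q := ((p ^ (k-1) : ℕ) : ZMod q) with hs
  set F : ZMod q → ℂ := fun x =>
    e (((n * ((x⁻¹.val : ℕ) : ℤ) + a * (x.val : ℤ) : ℤ) : ℝ) / q) with hF
  set U := Finset.univ.filter (fun x : ZMod q => IsUnit x) with hU
  -- Step 1: rewrite as a sum over units of ZMod q
  have hstep1 : kloosterman n a q = ∑ x ∈ U, F x := by
    rw [kloosterman]
    refine Finset.sum_nbij' (fun b => (b : ZMod q)) (fun x => x.val) ?_ ?_ ?_ ?_ ?_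
    · intro b hb
      simp only [Finset.mem_filter, Finset.mem_range] at hb
      simp only [hU, Finset.mem_filter, Finset.mem_univ, true_and]
      exact (ZMod.isUnit_iff_coprime b q).mpr hb.2
    · intro x hx
      simp only [hU, Finset.mem_filter, Finset.mem_univ, true_and] at hx
      simp only [Finset.mem_filter, Finset.mem_range]
      refine ⟨ZMod.val_lt x, ?_⟩
      exact ((ZMod.isUnit_iff_coprime x.val q).mp (by rwa [ZMod.natCast_val, ZMod.cast_id]))
    · intro b hb
      simp only [Finset.mem_filter, Finset.mem_range] at hb
      exact ZMod.val_natCast_of_lt hb.1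
    · intro x hx
      simp [ZMod.natCast_val, ZMod.cast_id]
    · intro b hb
      simp only [Finset.mem_filter, Finset.mem_range] at hb
      simp only [hF]
      rw [ZMod.val_natCast_of_lt hb.1]
  -- basic divisibilities
  have hpdvd : (p:ℤ) ∣ (q:ℤ) := by
    exact_mod_cast Int.natCast_dvd_natCast.mpr (dvd_pow_self p (by omega : k ≠ 0))
  have hpdvd' : (p:ℤ) ∣ (p:ℤ)^(k-1) := dvd_pow_self _ (by omega)
  have hmdvd : p ^ (k-1) ∣ q := pow_dvd_pow p (by omega)
  have hqfact : (q:ℤ) = (p:ℤ) * (p:ℤ)^(k-1) := by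
    have h : p ^ k = p * p ^ (k-1) := by
      conv_lhs => rw [show k = (k-1)+1 by omega]
      rw [pow_succ]; ring
    push_cast [hq, h]
    ring
  -- congruence for vals under shift by s
  have hval : ∀ x : ZMod q, (q:ℤ) ∣ ((x + s).val : ℤ) - (((x.val : ℤ)) + (p:ℤ)^(k-1)) := by
    intro x
    have h : ((((x+s).val : ℤ)) : ZMod q) = ((((x.val : ℤ)) + (p:ℤ)^(k-1) : ℤ) : ZMod q) := by
      push_cast
      simp [ZMod.natCast_val, ZMod.cast_id, hs]
    rw [ZMod.intCast_eq_intCast_iff] at h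
    exact h.symm.dvd
  have hvalp : ∀ x : ZMod q, (p:ℤ) ∣ ((x + s).val : ℤ) - (x.val : ℤ) := by
    intro x
    have h1 := dvd_trans hpdvd (hval x)
    have h2 : (p:ℤ) ∣ (((x+s).val : ℤ) - (x.val : ℤ)) - (p:ℤ)^(k-1) := by
      rw [sub_sub]; exact h1
    simpa using dvd_add h2 hpdvd'
  have hcop_iff : ∀ m : ℕ, Nat.Coprime m q ↔ ¬ (p ∣ m) := by
    intro m
    rw [Nat.coprime_comm, hq, Nat.coprime_pow_left_iff (by omega), hp.coprime_iff_not_dvd]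
  -- shift preserves units (iff version)
  have hunit_iff : ∀ x : ZMod q, IsUnit (x + s) ↔ IsUnit x := by
    intro x
    have key : ∀ y : ZMod q, IsUnit y ↔ ¬ (p:ℤ) ∣ (y.val : ℤ) := by
      intro y
      rw [show IsUnit y ↔ Nat.Coprime y.val q from
        ⟨fun h => (ZMod.isUnit_iff_coprime y.val q).mp (by rwa [ZMod.natCast_val, ZMod.cast_id]),
         fun h => by have := (ZMod.isUnit_iff_coprime y.val q).mpr h;
                     rwa [ZMod.natCast_val, ZMod.cast_id] at this⟩]
      rw [hcop_iff]
      exact not_congr (Int.natCast_dvd_natCast).symm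
    rw [key, key]
    have h1 := hvalp x
    constructor
    · intro h hd
      exact h (by simpa using dvd_add hd h1)
    · intro h hd
      exact h (by simpa using dvd_sub hd h1)
  -- the inverse congruence
  have hinv : ∀ x : ZMod q, IsUnit x →
      ((p:ℤ))^(k-1) ∣ (((x + s)⁻¹.val : ℤ) - ((x⁻¹.val : ℤ))) := by
    intro x hx
    set φ := ZMod.castHom hmdvd (ZMod (p^(k-1))) with hφ
    have hcast : φ (x + s) = φ x := by
      rw [map_add]
      have : φ s = 0 := by
        rw [hs, map_natCast, ZMod.natCast_self]
      rw [this, add_zero]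
    have hux : x * x⁻¹ = 1 := ZMod.mul_inv_of_unit x hx
    have huz : (x + s) * (x + s)⁻¹ = 1 :=
      ZMod.mul_inv_of_unit _ ((hunit_iff x).mpr hx)
    have h1 : φ x * φ x⁻¹ = 1 := by rw [← map_mul, hux, map_one]
    have h2 : φ x * φ (x + s)⁻¹ = 1 := by rw [← hcast, ← map_mul, huz, map_one]
    have h3 : φ (x + s)⁻¹ = φ x⁻¹ := by
      calc φ (x + s)⁻¹ = (φ x * φ x⁻¹) * φ (x + s)⁻¹ := by rw [h1, one_mul]
      _ = (φ x * φ (x + s)⁻¹) * φ x⁻¹ := by ring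
      _ = φ x⁻¹ := by rw [h2, one_mul]
    have h4 : (((x + s)⁻¹.val : ℕ) : ZMod (p^(k-1))) = ((x⁻¹.val : ℕ) : ZMod (p^(k-1))) := by
      rw [ZMod.natCast_val, ZMod.natCast_val]
      simpa only [hφ, ZMod.castHom_apply] using h3
    rw [ZMod.natCast_eq_natCast_iff] at h4
    have h5 := (Nat.modEq_iff_dvd.mp h4)
    push_cast at h5 ⊢
    exact dvd_neg.mp (by simpa [neg_sub] using h5)
  -- the key shift identity
  have hshift : ∀ x : ZMod q, IsUnit x → F (x + s) = e ((a:ℝ)/p) * F x := by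
    intro x hx
    have hdvd : (q:ℤ) ∣ (n * ((x + s)⁻¹.val : ℤ) + a * ((x + s).val : ℤ)) -
        (n * (x⁻¹.val : ℤ) + a * (x.val : ℤ) + a * (p:ℤ)^(k-1)) := by
      have e1 : (n * ((x + s)⁻¹.val : ℤ) + a * ((x + s).val : ℤ)) -
          (n * (x⁻¹.val : ℤ) + a * (x.val : ℤ) + a * (p:ℤ)^(k-1)) =
          n * (((x + s)⁻¹.val : ℤ) - (x⁻¹.val : ℤ)) +
          a * (((x + s).val : ℤ) - ((x.val : ℤ) + (p:ℤ)^(k-1))) := by ring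
      rw [e1]
      refine dvd_add ?_ (Dvd.dvd.mul_left (hval x) a)
      obtain ⟨n₀, hn₀⟩ := hn
      obtain ⟨c, hc⟩ := hinv x hx
      rw [hn₀, hc, hqfact]
      exact ⟨n₀ * c, by ring⟩
    have heq := e_eq_of_dvd q hqpos.ne' hdvd
    simp only [hF]
    rw [heq]
    have hpne : (p:ℝ) ≠ 0 := Nat.cast_ne_zero.mpr hp.pos.ne'
    have hqne : (q:ℝ) ≠ 0 := Nat.cast_ne_zero.mpr hqpos.ne'
    have hqfactR : (q:ℝ) = (p:ℝ) * (p:ℝ)^(k-1) := by exact_mod_cast hqfact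
    have harith : ((n * (x⁻¹.val : ℤ) + a * (x.val : ℤ) + a * (p:ℤ)^(k-1) : ℤ) : ℝ) / q =
        (a:ℝ)/p + ((n * (x⁻¹.val : ℤ) + a * (x.val : ℤ) : ℤ) : ℝ) / q := by
      push_cast
      rw [hqfactR]
      have : ((p:ℝ)^(k-1)) ≠ 0 := pow_ne_zero _ hpne
      field_simp
      ring
    rw [harith, e_add]
  -- reindex the sum
  have hstep2 : ∑ x ∈ U, F x = e ((a:ℝ)/p) * ∑ x ∈ U, F x := by
    rw [Finset.mul_sum]
    refine Finset.sum_nbij' (fun x => x - s) (fun x => x + s) ?_ ?_ ?_ ?_ ?_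
    · intro x hx
      simp only [hU, Finset.mem_filter, Finset.mem_univ, true_and] at hx ⊢
      rw [← hunit_iff (x - s)]
      simpa using hx
    · intro x hx
      simp only [hU, Finset.mem_filter, Finset.mem_univ, true_and] at hx ⊢
      exact (hunit_iff x).mpr hx
    · intro x _; ring
    · intro x _; ring
    · intro x hx
      simp only [hU, Finset.mem_filter, Finset.mem_univ, true_and] at hx
      have h := hshift (x - s) (by rw [← hunit_iff (x - s)]; simpa using hx)
      rw [sub_add_cancel] at h
      exact h
  -- conclude
  have hne : e ((a:ℝ)/p) ≠ 1 := by
    intro h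
    rw [e, Complex.exp_eq_one_iff] at h
    obtain ⟨m, hm⟩ := h
    have h2pi : (2 * (Real.pi:ℂ) * Complex.I) ≠ 0 := by
      simp [Real.pi_ne_zero, Complex.I_ne_zero]
    have hcm : (((a:ℝ)/p : ℝ) : ℂ) = (m:ℂ) := by
      apply mul_left_cancel₀ h2pi
      rw [show (2 * (Real.pi:ℂ) * Complex.I) * (((a:ℝ)/p : ℝ) : ℂ)
          = 2 * (Real.pi:ℂ) * Complex.I * (((a:ℝ)/p : ℝ) : ℂ) from by ring, hm]
      ring
    have hrm : (a:ℝ)/p = (m:ℝ) := by exact_mod_cast hcm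
    have hpne : (p:ℝ) ≠ 0 := Nat.cast_ne_zero.mpr hp.pos.ne'
    have : (a:ℝ) = (m:ℝ) * p := by field_simp at hrm; linarith [hrm]
    have hz : a = m * p := by exact_mod_cast this
    have hdvd : (p:ℤ) ∣ a := ⟨m, by linarith [hz]⟩
    have hcop : IsCoprime a (p:ℤ) := Int.isCoprime_iff_gcd_eq_one.mpr ha
    have := hcop.isUnit_of_dvd' hdvd dvd_rfl
    rw [Int.isUnit_iff] at this
    rcases this with h' | h' <;> omega
  have hS := hstep2
  have : (∑ x ∈ U, F x) * (1 - e ((a:ℝ)/p)) = 0 := by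
    linear_combination hS
  rw [hstep1]
  rcases mul_eq_zero.mp this with h | h
  · exact h
  · exact absurd (sub_eq_zero.mp h).symm hne
end

section
/- Let p be a prime, m = p^μ a prime power, and f(X) = a_0 + a_1X + ⋯ + a_dX^d an integer polynomial of degree d ≥ 2 with gcd(a_0, …, a_d, p) = 1. Then for any integers Q ≥ 1, the number R(Q, p^μ) of solutions x with 1 ≤ x ≤ Q of f(x) ≡ 0 (mod p^μ) satisfies R(Q, p^μ) ≤ C·(d·(Qp)^{1−1/d} + d·Q·p^{−μ/d}) for some absolute constant C, assuming the bound ρ(f, p^ω) ≤ c_d·p^{ω(1−1/d)} for the number of roots modulo p^ω with c_d ≪ d. -/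
open Polynomial

-- helper: dvd of eval depends only on residue
lemma eval_dvd_emod (n x : ℤ) (f : Polynomial ℤ) :
    n ∣ f.eval x ↔ n ∣ f.eval (x % n) := by
  have h1 : n ∣ x - x % n := ⟨x / n, by have := Int.mul_ediv_add_emod x n; linarith⟩
  have h2 : n ∣ f.eval x - f.eval (x % n) :=
    dvd_trans h1 (Polynomial.sub_dvd_eval_sub _ _ f)
  constructor
  · intro h; have := dvd_sub h h2; simpa using this
  · intro h; have := dvd_add h h2; simpa using this

lemma ncard_prod' {α β : Type*} (s : Set α) (t : Set β) :
    (s ×ˢ t).ncard = s.ncard * t.ncard := by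
  rw [← Nat.card_coe_set_eq, ← Nat.card_coe_set_eq, ← Nat.card_coe_set_eq,
    Nat.card_congr (Equiv.Set.prod s t), Nat.card_prod]

/-- Let `p` be prime, `f ∈ ℤ[X]` of degree `d ≥ 2` with not all coefficients divisible
by `p` (i.e. `gcd(a_0,…,a_d,p) = 1`). Assuming the root-count bound
`ρ(f, p^ω) ≤ c_d · (p^ω)^{1−1/d}` with `c_d ≪ d`, the number `R(Q, p^μ)` of solutions
`1 ≤ x ≤ Q` of `f(x) ≡ 0 (mod p^μ)` satisfies
`R(Q, p^μ) ≤ C (d (Qp)^{1−1/d} + d Q p^{−μ/d})` for an absolute constant `C`. -/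
theorem count_poly_roots_interval :
    ∃ C : ℝ, 0 < C ∧
      ∀ (p d μ Q : ℕ) (f : Polynomial ℤ) (cd : ℝ),
        p.Prime → 2 ≤ d → f.natDegree = d → (∃ i, ¬ (p : ℤ) ∣ f.coeff i) →
        1 ≤ μ → 1 ≤ Q → cd ≤ (d : ℝ) →
        (∀ ω : ℕ, 1 ≤ ω →
          (Set.ncard {x : ℤ | 0 ≤ x ∧ x < (p : ℤ) ^ ω ∧ (p : ℤ) ^ ω ∣ f.eval x} : ℝ)
            ≤ cd * ((p : ℝ) ^ ω) ^ (1 - 1 / (d : ℝ))) →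
        (Set.ncard {x : ℤ | 1 ≤ x ∧ x ≤ (Q : ℤ) ∧ (p : ℤ) ^ μ ∣ f.eval x} : ℝ)
          ≤ C * ((d : ℝ) * ((Q : ℝ) * p) ^ (1 - 1 / (d : ℝ))
              + (d : ℝ) * Q * (p : ℝ) ^ (-(μ : ℝ) / d)) := by
  refine ⟨2, by norm_num, ?_⟩
  intro p d μ Q f cd hp hd hdeg _ hμ hQ hcd hrho
  set e : ℝ := 1 - 1 / (d : ℝ) with he
  have hd0 : (2 : ℝ) ≤ (d : ℝ) := by exact_mod_cast hd
  have hdpos : (0 : ℝ) < d := by linarith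
  have he0 : 0 ≤ e := by
    rw [he]
    have : 1 / (d : ℝ) ≤ 1 / 2 := by
      apply one_div_le_one_div_of_le <;> linarith
    linarith
  have hppos : (0 : ℝ) < p := by exact_mod_cast hp.pos
  have hp1 : (1 : ℝ) ≤ p := by exact_mod_cast hp.one_lt.le
  have hQ1 : (1 : ℝ) ≤ Q := by exact_mod_cast hQ
  -- the solution set over [1, Q]
  set S : Set ℤ := {x : ℤ | 1 ≤ x ∧ x ≤ (Q : ℤ) ∧ (p : ℤ) ^ μ ∣ f.eval x} with hS
  have hSfin : S.Finite := by
    apply Set.Finite.subset (Set.finite_Icc (1 : ℤ) Q)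
    intro x hx; exact ⟨hx.1, hx.2.1⟩
  -- abbreviation for root sets
  have Tfin : ∀ ω : ℕ,
      ({x : ℤ | 0 ≤ x ∧ x < (p : ℤ) ^ ω ∧ (p : ℤ) ^ ω ∣ f.eval x}).Finite := by
    intro ω
    apply Set.Finite.subset (Set.finite_Ico (0 : ℤ) ((p : ℤ) ^ ω))
    intro x hx; exact ⟨hx.1, hx.2.1⟩
  -- root count bounded by d * (p^ω)^e
  have hrho' : ∀ ω : ℕ, 1 ≤ ω →
      (Set.ncard {x : ℤ | 0 ≤ x ∧ x < (p : ℤ) ^ ω ∧ (p : ℤ) ^ ω ∣ f.eval x} : ℝ)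
        ≤ (d : ℝ) * ((p : ℝ) ^ ω) ^ e := by
    intro ω hω
    refine (hrho ω hω).trans ?_
    have hA : (0 : ℝ) ≤ ((p : ℝ) ^ ω) ^ e := Real.rpow_nonneg (by positivity) _
    exact mul_le_mul_of_nonneg_right hcd hA
  have nonneg1 : (0 : ℝ) ≤ (d : ℝ) * ((Q : ℝ) * p) ^ e := by positivity
  have nonneg2 : (0 : ℝ) ≤ (d : ℝ) * Q * (p : ℝ) ^ (-(μ : ℝ) / d) := by positivity
  rcases le_or_gt ((p : ℤ) ^ μ) (Q : ℤ) with hcase | hcase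
  · -- Case 1 : p^μ ≤ Q, split into blocks of length m = p^μ
    set m : ℤ := (p : ℤ) ^ μ with hm
    have hmpos : (0 : ℤ) < m := by
      rw [hm]; exact pow_pos (by exact_mod_cast hp.pos) μ
    set K : ℤ := (Q : ℤ) / m + 1 with hK
    set T : Set ℤ := {x : ℤ | 0 ≤ x ∧ x < m ∧ m ∣ f.eval x} with hT
    -- injection S → T ×ˢ Ico 0 K
    have hcount : S.ncard ≤ T.ncard * K.toNat := by
      have hmaps : ∀ x ∈ S, (x % m, x / m) ∈ T ×ˢ Set.Ico (0 : ℤ) K := by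
        intro x hx
        obtain ⟨hx1, hx2, hx3⟩ := hx
        refine ⟨⟨Int.emod_nonneg x hmpos.ne', Int.emod_lt_of_pos x hmpos, ?_⟩, ?_, ?_⟩
        · exact (eval_dvd_emod m x f).mp hx3
        · exact Int.ediv_nonneg (by linarith) hmpos.le
        · have h1 : x / m ≤ (Q : ℤ) / m := Int.ediv_le_ediv hmpos hx2
          omega
      have hinj : Set.InjOn (fun x : ℤ => (x % m, x / m)) S := by
        intro x _ y _ hxy
        simp only [Prod.mk.injEq] at hxy
        have := Int.mul_ediv_add_emod x m
        have := Int.mul_ediv_add_emod y m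
        rw [← hxy.1, ← hxy.2] at *
        omega
      have htfin : (T ×ˢ Set.Ico (0 : ℤ) K).Finite :=
        Set.Finite.prod (Tfin μ) (Set.finite_Ico _ _)
      have := Set.ncard_le_ncard_of_injOn _ hmaps hinj htfin
      rwa [ncard_prod', ← Finset.coe_Ico, Set.ncard_coe_finset, Int.card_Ico,
        sub_zero] at this
    -- real estimates
    have hmR : ((m : ℤ) : ℝ) = (p : ℝ) ^ (μ : ℝ) := by
      rw [hm]; push_cast; rw [Real.rpow_natCast]
    have hmRpos : (0 : ℝ) < ((m : ℤ) : ℝ) := by exact_mod_cast hmpos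
    have hKR : (K.toNat : ℝ) ≤ 2 * (Q : ℝ) / ((m : ℤ) : ℝ) := by
      have hK0 : (0 : ℤ) ≤ K := by
        have : (0 : ℤ) ≤ (Q : ℤ) / m := Int.ediv_nonneg (by positivity) hmpos.le
        omega
      have h1 : (((Q : ℤ) / m : ℤ) : ℝ) ≤ (Q : ℝ) / ((m : ℤ) : ℝ) := by
        rw [le_div_iff₀ hmRpos]
        have := Int.ediv_mul_le (Q : ℤ) hmpos.ne'
        exact_mod_cast this
      have h2 : (1 : ℝ) ≤ (Q : ℝ) / ((m : ℤ) : ℝ) := by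
        rw [le_div_iff₀ hmRpos]
        have : (m : ℝ) ≤ (Q : ℝ) := by exact_mod_cast hcase
        linarith
      have h3 : (K.toNat : ℝ) = (((Q : ℤ) / m : ℤ) : ℝ) + 1 := by
        have h4 : ((K.toNat : ℤ) : ℝ) = ((K : ℤ) : ℝ) := by
          exact_mod_cast congrArg (fun z : ℤ => (z : ℝ)) (Int.toNat_of_nonneg hK0)
        rw [show ((K.toNat : ℕ) : ℝ) = ((K.toNat : ℤ) : ℝ) by push_cast; ring, h4, hK]
        push_cast
        ring
      rw [h3]
      have : 2 * (Q : ℝ) / ((m : ℤ) : ℝ) = (Q : ℝ) / ((m : ℤ) : ℝ) + (Q : ℝ) / ((m : ℤ) : ℝ) := by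
        ring
      rw [this]
      linarith
    have hTbound : (T.ncard : ℝ) ≤ (d : ℝ) * ((p : ℝ) ^ μ) ^ e := hrho' μ hμ
    have step1 : (S.ncard : ℝ) ≤ (K.toNat : ℝ) * ((d : ℝ) * ((p : ℝ) ^ μ) ^ e) := by
      have : (S.ncard : ℝ) ≤ (T.ncard : ℝ) * (K.toNat : ℝ) := by exact_mod_cast hcount
      calc (S.ncard : ℝ) ≤ (T.ncard : ℝ) * (K.toNat : ℝ) := this
        _ ≤ ((d : ℝ) * ((p : ℝ) ^ μ) ^ e) * (K.toNat : ℝ) :=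
            mul_le_mul_of_nonneg_right hTbound (by positivity)
        _ = (K.toNat : ℝ) * ((d : ℝ) * ((p : ℝ) ^ μ) ^ e) := by ring
    have step2 : (K.toNat : ℝ) * ((d : ℝ) * ((p : ℝ) ^ μ) ^ e)
        ≤ (2 * (Q : ℝ) / ((m : ℤ) : ℝ)) * ((d : ℝ) * ((p : ℝ) ^ μ) ^ e) :=
      mul_le_mul_of_nonneg_right hKR (by positivity)
    have hpow : ((p : ℝ) ^ μ) ^ e / ((m : ℤ) : ℝ) = (p : ℝ) ^ (-(μ : ℝ) / d) := by
      rw [hmR, ← Real.rpow_natCast (p : ℝ) μ, ← Real.rpow_mul hppos.le,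
        ← Real.rpow_sub hppos]
      congr 1
      rw [he]; field_simp; ring
    have step3 : (2 * (Q : ℝ) / ((m : ℤ) : ℝ)) * ((d : ℝ) * ((p : ℝ) ^ μ) ^ e)
        = 2 * ((d : ℝ) * Q * (p : ℝ) ^ (-(μ : ℝ) / d)) := by
      rw [← hpow]; field_simp
    calc (S.ncard : ℝ) ≤ 2 * ((d : ℝ) * Q * (p : ℝ) ^ (-(μ : ℝ) / d)) := by
          rw [← step3]; exact step1.trans step2
      _ ≤ 2 * ((d : ℝ) * ((Q : ℝ) * p) ^ e + (d : ℝ) * Q * (p : ℝ) ^ (-(μ : ℝ) / d)) := by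
          linarith
  · -- Case 2 : Q < p^μ. Choose minimal ω ≥ 1 with Q ≤ p^ω.
    have hex : ∃ n : ℕ, (Q : ℤ) ≤ (p : ℤ) ^ (n + 1) := by
      refine ⟨μ - 1, ?_⟩
      have : μ - 1 + 1 = μ := by omega
      rw [this]; exact hcase.le
    set k := Nat.find hex with hk
    set ω := k + 1 with hω
    have hQω : (Q : ℤ) ≤ (p : ℤ) ^ ω := Nat.find_spec hex
    have hωμ : ω ≤ μ := by
      have : k ≤ μ - 1 := Nat.find_min' hex (by
        have : μ - 1 + 1 = μ := by omega
        rw [this]; exact hcase.le)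
      omega
    have hωQ : ((p : ℤ) ^ ω : ℤ) ≤ (p : ℤ) * Q := by
      rcases Nat.eq_zero_or_pos k with hk0 | hk0
      · rw [hω, hk0]
        simp only [zero_add, pow_one]
        have : (1 : ℤ) ≤ Q := by exact_mod_cast hQ
        nlinarith [hp.one_lt, (by exact_mod_cast hp.one_lt.le : (1:ℤ) ≤ p)]
      · have hmin : ¬ ((Q : ℤ) ≤ (p : ℤ) ^ ((k - 1) + 1)) := Nat.find_min hex (by omega)
        have hkk : k - 1 + 1 = k := by omega
        rw [hkk] at hmin
        push_neg at hmin
        have : (p : ℤ) ^ ω = (p : ℤ) * (p : ℤ) ^ k := by rw [hω, pow_succ]; ring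
        rw [this]
        have hp0 : (0 : ℤ) < p := by exact_mod_cast hp.pos
        nlinarith
    set T : Set ℤ := {x : ℤ | 0 ≤ x ∧ x < (p : ℤ) ^ ω ∧ (p : ℤ) ^ ω ∣ f.eval x} with hT
    have hcount : S.ncard ≤ T.ncard := by
      have hmpos : (0 : ℤ) < (p : ℤ) ^ ω := pow_pos (by exact_mod_cast hp.pos) ω
      have hmaps : ∀ x ∈ S, x % ((p : ℤ) ^ ω) ∈ T := by
        intro x hx
        obtain ⟨hx1, hx2, hx3⟩ := hx
        refine ⟨Int.emod_nonneg x hmpos.ne', Int.emod_lt_of_pos x hmpos, ?_⟩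
        have hdvd : (p : ℤ) ^ ω ∣ f.eval x :=
          dvd_trans (pow_dvd_pow _ hωμ) hx3
        exact (eval_dvd_emod _ x f).mp hdvd
      have hinj : Set.InjOn (fun x : ℤ => x % ((p : ℤ) ^ ω)) S := by
        intro x hx y hy hxy
        obtain ⟨hx1, hx2, _⟩ := hx
        obtain ⟨hy1, hy2, _⟩ := hy
        simp only at hxy
        have h1 : ((p : ℤ) ^ ω) ∣ (y - x) := Int.ModEq.dvd hxy
        have hb : |y - x| < (p : ℤ) ^ ω := by rw [abs_lt]; omega
        have := Int.eq_zero_of_abs_lt_dvd h1 hb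
        omega
      exact Set.ncard_le_ncard_of_injOn _ hmaps hinj (Tfin ω)
    have hpe : ((p : ℝ) ^ ω) ^ e ≤ ((Q : ℝ) * p) ^ e := by
      apply Real.rpow_le_rpow (by positivity) _ he0
      have : ((p : ℝ) ^ ω) ≤ (p : ℝ) * Q := by exact_mod_cast hωQ
      linarith
    calc (S.ncard : ℝ) ≤ (T.ncard : ℝ) := by exact_mod_cast hcount
      _ ≤ (d : ℝ) * ((p : ℝ) ^ ω) ^ e := hrho' ω (by omega)
      _ ≤ (d : ℝ) * ((Q : ℝ) * p) ^ e := mul_le_mul_of_nonneg_left hpe (by positivity)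
      _ ≤ 2 * ((d : ℝ) * ((Q : ℝ) * p) ^ e + (d : ℝ) * Q * (p : ℝ) ^ (-(μ : ℝ) / d)) := by
          linarith
end

section
/- Let p be an odd prime, i ≥ 3, and 3 ≤ u ≤ i. Then ν_p( C(1/2, i) · i!/(i−u)! ) ≤ u·Σ_{j=1}^{∞} p^{−j} + 3·log(2i)/log p, where C(1/2, i) is the generalized binomial coefficient and ν_p the p-adic valuation on ℚ. -/
open Finset

/-- Product of the first `m` odd numbers. -/
def oddProd (m : ℕ) : ℕ := ∏ j ∈ Finset.range m, (2 * j + 1)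

lemma oddProd_pos (m : ℕ) : 0 < oddProd m :=
  Finset.prod_pos fun _ _ => Nat.succ_pos _

lemma oddProd_succ (m : ℕ) : oddProd (m + 1) = oddProd m * (2 * m + 1) := by
  rw [oddProd, Finset.prod_range_succ]; rfl

lemma factorial_two_mul (m : ℕ) :
    Nat.factorial (2 * m) = 2 ^ m * Nat.factorial m * oddProd m := by
  induction m with
  | zero => simp [oddProd]
  | succ n ih =>
    have h2 : 2 * (n + 1) = (2 * n + 1) + 1 := by ring
    rw [h2, Nat.factorial_succ, Nat.factorial_succ, ih, oddProd_succ,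
      Nat.factorial_succ, pow_succ]
    ring

lemma prod_half_sub (i : ℕ) (hi : 1 ≤ i) :
    ∏ j ∈ Finset.range i, ((1 : ℚ) / 2 - j)
      = (-1) ^ (i - 1) * (oddProd (i - 1) : ℚ) / 2 ^ i := by
  induction i with
  | zero => omega
  | succ n ih =>
    rcases Nat.eq_or_lt_of_le hi with h | h
    · simp [← h, oddProd]
    · obtain ⟨k, rfl⟩ : ∃ k, n = k + 1 := ⟨n - 1, by omega⟩
      rw [Finset.prod_range_succ, ih (by omega)]
      simp only [Nat.add_sub_cancel, oddProd_succ]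
      push_cast
      rw [pow_succ (2 : ℚ) (k + 1), pow_succ (-1 : ℚ) k]
      field_simp
      ring

/-- The generalized binomial coefficient `(1/2 choose i)` as a rational number. -/
noncomputable def chooseHalf (i : ℕ) : ℚ :=
  (∏ j ∈ Finset.range i, ((1 : ℚ) / 2 - j)) / (Nat.factorial i : ℚ)

lemma padic_two_pow (p : ℕ) (hp : p.Prime) (hodd : Odd p) (k : ℕ) :
    padicValNat p (2 ^ k) = 0 := by
  apply padicValNat.eq_zero_of_not_dvd
  intro hdvd
  have h2 : p = 2 := (Nat.prime_dvd_prime_iff_eq hp Nat.prime_two).1 (hp.dvd_of_dvd_pow hdvd)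
  rw [h2] at hodd
  exact (Nat.not_odd_iff_even.2 even_two) hodd

lemma val_eq (p : ℕ) (hp : p.Prime) (hodd : Odd p) (i u : ℕ)
    (hu3 : 3 ≤ u) (hui : u ≤ i) :
    padicValRat p (chooseHalf i *
        ((Nat.factorial i : ℚ) / (Nat.factorial (i - u) : ℚ)))
      = (padicValNat p (Nat.factorial (2 * (i - 1))) : ℤ)
        - padicValNat p (Nat.factorial (i - 1))
        - padicValNat p (Nat.factorial (i - u)) := by
  have hi1 : 1 ≤ i := by omega
  have hfi : (Nat.factorial i : ℚ) ≠ 0 := Nat.cast_ne_zero.2 (Nat.factorial_ne_zero i)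
  have hfiu : (Nat.factorial (i - u) : ℚ) ≠ 0 := Nat.cast_ne_zero.2 (Nat.factorial_ne_zero _)
  have hN : ((oddProd (i - 1) : ℚ)) ≠ 0 := Nat.cast_ne_zero.2 (oddProd_pos _).ne'
  have h2 : ((2 : ℚ) ^ i) ≠ 0 := by positivity
  set Q : ℚ := (oddProd (i - 1) : ℚ) / (2 ^ i * (Nat.factorial (i - u) : ℚ)) with hQ
  have hexpr : chooseHalf i * ((Nat.factorial i : ℚ) / (Nat.factorial (i - u) : ℚ))
      = (-1) ^ (i - 1) * Q := by
    rw [chooseHalf, prod_half_sub i hi1, hQ]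
    field_simp
  have hQne : Q ≠ 0 := by
    rw [hQ]
    positivity
  have hsign : padicValRat p (chooseHalf i *
      ((Nat.factorial i : ℚ) / (Nat.factorial (i - u) : ℚ))) = padicValRat p Q := by
    rw [hexpr]
    rcases Nat.even_or_odd (i - 1) with h | h
    · rw [h.neg_one_pow, one_mul]
    · rw [h.neg_one_pow, neg_one_mul, padicValRat.neg]
  haveI : Fact p.Prime := ⟨hp⟩
  have hvQ : padicValRat p Q
      = (padicValNat p (oddProd (i - 1)) : ℤ) - padicValNat p (Nat.factorial (i - u)) := by
    rw [hQ, padicValRat.div (by exact_mod_cast hN) (by positivity),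
      padicValRat.mul h2 hfiu]
    have h2i : ((2 : ℚ) ^ i) = ((2 ^ i : ℕ) : ℚ) := by push_cast; ring
    rw [h2i, padicValRat.of_nat, padicValRat.of_nat, padicValRat.of_nat,
      padic_two_pow p hp hodd]
    push_cast
    ring
  have hsplit : padicValNat p (Nat.factorial (2 * (i - 1)))
      = padicValNat p (2 ^ (i - 1)) + padicValNat p (Nat.factorial (i - 1))
        + padicValNat p (oddProd (i - 1)) := by
    rw [factorial_two_mul]
    rw [padicValNat.mul (by positivity) (oddProd_pos _).ne',
      padicValNat.mul (by positivity) (Nat.factorial_ne_zero _)]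
  rw [hsign, hvQ]
  rw [hsplit, padic_two_pow p hp hodd]
  push_cast
  ring


/-- For an odd prime `p`, `i ≥ 3` and `3 ≤ u ≤ i`,
`ν_p( C(1/2, i) · i!/(i−u)! ) ≤ u·Σ_{j=1}^∞ p^{−j} + 3 log(2i)/log p`. -/
theorem padicValRat_chooseHalf_mul_le (p : ℕ) (hp : p.Prime) (hodd : Odd p)
    (i u : ℕ) (hu3 : 3 ≤ u) (hui : u ≤ i) :
    (padicValRat p (chooseHalf i *
        ((Nat.factorial i : ℚ) / (Nat.factorial (i - u) : ℚ))) : ℝ)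
      ≤ (u : ℝ) * (∑' j : ℕ, ((p : ℝ))⁻¹ ^ (j + 1))
        + 3 * Real.log (2 * i) / Real.log p := by
  haveI : Fact p.Prime := ⟨hp⟩
  have hp1 : 1 < p := hp.one_lt
  have hp3 : 3 ≤ p := by
    rcases hodd with ⟨k, hk⟩
    omega
  set m := i - 1 with hm
  have hm2 : 2 ≤ m := by omega
  set L := Nat.log p (2 * m) with hL
  set b := L + 1 with hb
  -- Legendre sums
  have hA : padicValNat p (Nat.factorial (2 * m))
      = ∑ j ∈ Finset.Ico 1 b, (2 * m) / p ^ j :=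
    padicValNat_factorial (by omega)
  have hB : padicValNat p (Nat.factorial m)
      = ∑ j ∈ Finset.Ico 1 b, m / p ^ j :=
    padicValNat_factorial (by
      have := Nat.log_mono_right (b := p) (show m ≤ 2 * m by omega)
      omega)
  have hC : padicValNat p (Nat.factorial (i - u))
      = ∑ j ∈ Finset.Ico 1 b, (i - u) / p ^ j :=
    padicValNat_factorial (by
      have := Nat.log_mono_right (b := p) (show i - u ≤ 2 * m by omega)
      omega)
  have hval := val_eq p hp hodd i u hu3 hui
  rw [hval, hA, hB, hC]
  -- move to ℝ
  have hcast : ((((∑ j ∈ Finset.Ico 1 b, (2 * m) / p ^ j : ℕ) : ℤ)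
      - ((∑ j ∈ Finset.Ico 1 b, m / p ^ j : ℕ) : ℤ)
      - ((∑ j ∈ Finset.Ico 1 b, (i - u) / p ^ j : ℕ) : ℤ) : ℤ) : ℝ)
      = ∑ j ∈ Finset.Ico 1 b,
        (((2 * m) / p ^ j : ℕ) - ((m / p ^ j : ℕ) : ℝ) - (((i - u) / p ^ j : ℕ) : ℝ)) := by
    rw [Int.cast_sub, Int.cast_sub, Int.cast_natCast, Int.cast_natCast, Int.cast_natCast,
      Nat.cast_sum, Nat.cast_sum, Nat.cast_sum, Finset.sum_sub_distrib, Finset.sum_sub_distrib]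
  rw [hcast]
  set r := ((p : ℝ))⁻¹ with hr
  have hr0 : (0:ℝ) ≤ r := by positivity
  have hr1 : r < 1 := by
    rw [hr]
    apply inv_lt_one_of_one_lt₀
    exact_mod_cast hp1
  have hsum : Summable (fun j : ℕ => r ^ (j + 1)) := by
    simpa only [pow_succ] using (summable_geometric_of_lt_one hr0 hr1).mul_right r
  have hT0 : (0:ℝ) ≤ ∑' j : ℕ, r ^ (j + 1) := tsum_nonneg fun j => pow_nonneg hr0 _
  have hterm : ∀ j ∈ Finset.Ico 1 b,
      (((2 * m) / p ^ j : ℕ) : ℝ) - ((m / p ^ j : ℕ) : ℝ) - (((i - u) / p ^ j : ℕ) : ℝ)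
        ≤ ((u : ℝ) - 1) * r ^ j + 2 := by
    intro j _
    have hP : (0:ℝ) < (p : ℝ) ^ j := by positivity
    have h1 : (((2 * m) / p ^ j : ℕ) : ℝ) ≤ 2 * (m : ℝ) / ((p:ℝ) ^ j) := by
      have := Nat.cast_div_le (α := ℝ) (m := 2 * m) (n := p ^ j)
      push_cast at this
      exact this
    have hnat2 : m < p ^ j * (m / p ^ j) + p ^ j := by
      have h := Nat.div_add_mod m (p ^ j)
      have := Nat.mod_lt m (pow_pos hp.pos j)
      omega
    have h2 : (m : ℝ) / ((p:ℝ) ^ j) - 1 ≤ ((m / p ^ j : ℕ) : ℝ) := by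
      rw [sub_le_iff_le_add, div_le_iff₀ hP]
      have : (m : ℝ) < ((p:ℝ) ^ j) * ((m / p ^ j : ℕ) : ℝ) + ((p:ℝ) ^ j) := by
        exact_mod_cast hnat2
      nlinarith
    have hnat3 : i - u < p ^ j * ((i - u) / p ^ j) + p ^ j := by
      have h := Nat.div_add_mod (i - u) (p ^ j)
      have := Nat.mod_lt (i - u) (pow_pos hp.pos j)
      omega
    have h3 : ((i - u : ℕ) : ℝ) / ((p:ℝ) ^ j) - 1 ≤ (((i - u) / p ^ j : ℕ) : ℝ) := by
      rw [sub_le_iff_le_add, div_le_iff₀ hP]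
      have : ((i - u : ℕ) : ℝ) < ((p:ℝ) ^ j) * (((i - u) / p ^ j : ℕ) : ℝ) + ((p:ℝ) ^ j) := by
        exact_mod_cast hnat3
      nlinarith
    have hiu : ((i - u : ℕ) : ℝ) = (i : ℝ) - u := by
      rw [Nat.cast_sub hui]
    have hmc : ((m : ℕ) : ℝ) = (i : ℝ) - 1 := by
      rw [hm, Nat.cast_sub (by omega)]
      norm_num
    have hrP : r ^ j = ((p:ℝ) ^ j)⁻¹ := by rw [hr, inv_pow]
    have key : 2 * (m : ℝ) / ((p:ℝ) ^ j) - ((m : ℝ) / ((p:ℝ) ^ j) - 1) - (((i - u : ℕ) : ℝ) / ((p:ℝ) ^ j) - 1)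
        = ((u : ℝ) - 1) * ((p:ℝ) ^ j)⁻¹ + 2 := by
      rw [hiu, hmc]
      field_simp
      ring
    rw [hrP]
    linarith
  have hstep := Finset.sum_le_sum hterm
  have hsplit2 : ∑ j ∈ Finset.Ico 1 b, (((u : ℝ) - 1) * r ^ j + 2)
      = ((u : ℝ) - 1) * (∑ j ∈ Finset.Ico 1 b, r ^ j) + 2 * L := by
    rw [Finset.sum_add_distrib, ← Finset.mul_sum, Finset.sum_const, Nat.card_Ico]
    simp [hb]
    ring
  have hS0 : (0:ℝ) ≤ ∑ j ∈ Finset.Ico 1 b, r ^ j :=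
    Finset.sum_nonneg fun j _ => pow_nonneg hr0 _
  have hS : ∑ j ∈ Finset.Ico 1 b, r ^ j ≤ ∑' j : ℕ, r ^ (j + 1) := by
    rw [Finset.sum_Ico_eq_sum_range]
    simp only [add_comm 1]
    exact Summable.sum_le_tsum _ (fun j _ => pow_nonneg hr0 _) hsum
  have hu' : (3:ℝ) ≤ u := by exact_mod_cast hu3
  have hfirst : ((u : ℝ) - 1) * (∑ j ∈ Finset.Ico 1 b, r ^ j)
      ≤ (u : ℝ) * ∑' j : ℕ, r ^ (j + 1) :=
    mul_le_mul (by linarith) hS hS0 (by linarith)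
  have hlogp : (0:ℝ) < Real.log p := Real.log_pos (by exact_mod_cast hp1)
  have hpow : ((p : ℝ)) ^ L ≤ 2 * (m : ℝ) := by
    exact_mod_cast Nat.pow_log_le_self p (show 2 * m ≠ 0 by omega)
  have hlog1 : (L : ℝ) * Real.log p ≤ Real.log (2 * m) := by
    rw [← Real.log_pow]
    exact Real.log_le_log (by positivity) hpow
  have hlog2 : Real.log (2 * (m:ℝ)) ≤ Real.log (2 * i) := by
    apply Real.log_le_log (by positivity)
    have : (m : ℝ) ≤ i := by
      exact_mod_cast Nat.sub_le i 1
    linarith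
  have hLle : (L : ℝ) ≤ Real.log (2 * i) / Real.log p := by
    rw [le_div_iff₀ hlogp]
    linarith
  have hlognn : (0:ℝ) ≤ Real.log (2 * i) / Real.log p := by
    apply div_nonneg _ hlogp.le
    apply Real.log_nonneg
    have : (3:ℝ) ≤ i := by exact_mod_cast le_trans hu3 hui
    linarith
  calc ∑ j ∈ Finset.Ico 1 b,
        ((((2 * m) / p ^ j : ℕ) : ℝ) - ((m / p ^ j : ℕ) : ℝ) - (((i - u) / p ^ j : ℕ) : ℝ))
      ≤ ∑ j ∈ Finset.Ico 1 b, (((u : ℝ) - 1) * r ^ j + 2) := hstep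
    _ = ((u : ℝ) - 1) * (∑ j ∈ Finset.Ico 1 b, r ^ j) + 2 * L := hsplit2
    _ ≤ (u : ℝ) * (∑' j : ℕ, r ^ (j + 1)) + 3 * Real.log (2 * i) / Real.log p := by
        rw [mul_div_assoc]
        linarith
end
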